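/- For i ∈ ℕ, the path graph P_{i+1} on i+1 vertices has edge-expansion h(P_{i+1}) = 2/(i+1) if i is odd and 2/i if i is even (i ≥ 1). -/

import Mathlib

/-- The edge-expansion of the path graph on `i+1` vertices is `2/(i+1)` if `i` is odd and
`2/i` if `i` is even, for `i ≥ 1`. -/
theorem stmt9 (i : ℕ) (hi : 1 ≤ i)
    (h : ℝ)
    (hh : h = sInf {x : ℝ | ∃ T : Finset (Fin (i + 1)), T.Nonempty ∧
      2 * T.card ≤ i + 1 ∧
      x = ((Finset.univ.filter (fun p : Fin (i + 1) × Fin (i + 1) =>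
          p.1 ∈ T ∧ p.2 ∉ T ∧ ((p.1 : ℕ) + 1 = (p.2 : ℕ) ∨ (p.2 : ℕ) + 1 = (p.1 : ℕ)))).card : ℝ)
        / (T.card : ℝ)}) :
    h = if Odd i then 2 / ((i : ℝ) + 1) else 2 / (i : ℝ) := by
  subst hh
  set S : Set ℝ := {x : ℝ | ∃ T : Finset (Fin (i + 1)), T.Nonempty ∧
      2 * T.card ≤ i + 1 ∧
      x = ((Finset.univ.filter (fun p : Fin (i + 1) × Fin (i + 1) =>
          p.1 ∈ T ∧ p.2 ∉ T ∧ ((p.1 : ℕ) + 1 = (p.2 : ℕ) ∨ (p.2 : ℕ) + 1 = (p.1 : ℕ)))).card : ℝ)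
        / (T.card : ℝ)} with hS
  set m : ℕ := (i + 1) / 2 with hm
  have hm1 : 1 ≤ m := by omega
  have hmlt : m < i + 1 := by omega
  have hm0 : (0 : ℝ) < (m : ℝ) := by exact_mod_cast hm1
  have hTall : ∀ x ∈ Finset.range m, x < i + 1 := by
    intro x hx; simp only [Finset.mem_range] at hx; omega
  set T0 : Finset (Fin (i + 1)) := (Finset.range m).attachFin hTall with hT0
  have hcard : T0.card = m := by
    rw [hT0, Finset.card_attachFin, Finset.card_range]
  have hmemT0 : ∀ x : Fin (i + 1), x ∈ T0 ↔ (x : ℕ) < m := by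
    intro x; rw [hT0, Finset.mem_attachFin, Finset.mem_range]
  have hbd : (Finset.univ.filter (fun p : Fin (i + 1) × Fin (i + 1) =>
          p.1 ∈ T0 ∧ p.2 ∉ T0 ∧ ((p.1 : ℕ) + 1 = (p.2 : ℕ) ∨ (p.2 : ℕ) + 1 = (p.1 : ℕ)))).card
        = 1 := by
    have heq : (Finset.univ.filter (fun p : Fin (i + 1) × Fin (i + 1) =>
          p.1 ∈ T0 ∧ p.2 ∉ T0 ∧ ((p.1 : ℕ) + 1 = (p.2 : ℕ) ∨ (p.2 : ℕ) + 1 = (p.1 : ℕ))))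
        = {((⟨m - 1, by omega⟩ : Fin (i + 1)), (⟨m, hmlt⟩ : Fin (i + 1)))} := by
      ext p
      simp only [Finset.mem_filter, Finset.mem_univ, true_and, hmemT0, Finset.mem_singleton,
        Prod.ext_iff, Fin.ext_iff]
      omega
    rw [heq, Finset.card_singleton]
  have hmem : (1 : ℝ) / (m : ℝ) ∈ S := by
    refine ⟨T0, ⟨⟨0, by omega⟩, (hmemT0 _).2 (by show 0 < m; omega)⟩, ?_, ?_⟩
    · rw [hcard]; omega
    · rw [hbd, hcard]; norm_num
  have hlb : ∀ x ∈ S, (1 : ℝ) / (m : ℝ) ≤ x := by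
    rintro x ⟨T, hne, hhalf, rfl⟩
    have hTpos : 0 < T.card := Finset.card_pos.mpr hne
    have hTle : T.card ≤ m := by omega
    obtain ⟨a, ha⟩ := hne
    obtain ⟨b, hb⟩ : ∃ b : Fin (i + 1), b ∉ T := by
      by_contra hall
      push_neg at hall
      have : T = Finset.univ := Finset.eq_univ_iff_forall.mpr hall
      rw [this, Finset.card_univ, Fintype.card_fin] at hhalf
      omega
    have key : ∃ p : Fin (i + 1) × Fin (i + 1),
        p.1 ∈ T ∧ p.2 ∉ T ∧ ((p.1 : ℕ) + 1 = (p.2 : ℕ) ∨ (p.2 : ℕ) + 1 = (p.1 : ℕ)) := by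
      by_contra hno
      have step : ∀ j : ℕ, (hj : j + 1 < i + 1) →
          (((⟨j, by omega⟩ : Fin (i + 1)) ∈ T) ↔ ((⟨j + 1, hj⟩ : Fin (i + 1)) ∈ T)) := by
        intro j hj
        constructor
        · intro hmem1
          by_contra h2
          exact hno ⟨((⟨j, by omega⟩ : Fin (i + 1)), (⟨j + 1, hj⟩ : Fin (i + 1))),
            hmem1, h2, Or.inl rfl⟩
        · intro hmem1
          by_contra h2
          exact hno ⟨((⟨j + 1, hj⟩ : Fin (i + 1)), (⟨j, by omega⟩ : Fin (i + 1))),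
            hmem1, h2, Or.inr rfl⟩
      have const : ∀ j : ℕ, (hj : j < i + 1) →
          (((⟨j, hj⟩ : Fin (i + 1)) ∈ T) ↔ ((⟨0, by omega⟩ : Fin (i + 1)) ∈ T)) := by
        intro j
        induction j with
        | zero => intro hj; exact Iff.rfl
        | succ k ih =>
          intro hj
          exact (step k hj).symm.trans (ih (by omega))
      have h0 : (⟨0, by omega⟩ : Fin (i + 1)) ∈ T := (const a.1 a.2).1 ha
      exact hb ((const b.1 b.2).2 h0)
    obtain ⟨p, hp1, hp2, hp3⟩ := key
    have hpmem : p ∈ Finset.univ.filter (fun p : Fin (i + 1) × Fin (i + 1) =>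
          p.1 ∈ T ∧ p.2 ∉ T ∧ ((p.1 : ℕ) + 1 = (p.2 : ℕ) ∨ (p.2 : ℕ) + 1 = (p.1 : ℕ))) :=
      Finset.mem_filter.2 ⟨Finset.mem_univ _, hp1, hp2, hp3⟩
    have hB : 1 ≤ (Finset.univ.filter (fun p : Fin (i + 1) × Fin (i + 1) =>
          p.1 ∈ T ∧ p.2 ∉ T ∧ ((p.1 : ℕ) + 1 = (p.2 : ℕ) ∨ (p.2 : ℕ) + 1 = (p.1 : ℕ)))).card :=
      Finset.card_pos.mpr ⟨p, hpmem⟩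
    have h1 : (1 : ℝ) ≤ ((Finset.univ.filter (fun p : Fin (i + 1) × Fin (i + 1) =>
          p.1 ∈ T ∧ p.2 ∉ T ∧ ((p.1 : ℕ) + 1 = (p.2 : ℕ) ∨ (p.2 : ℕ) + 1 = (p.1 : ℕ)))).card : ℝ) := by
      exact_mod_cast hB
    have h2 : (T.card : ℝ) ≤ (m : ℝ) := by exact_mod_cast hTle
    have hTc0 : (0 : ℝ) < (T.card : ℝ) := by exact_mod_cast hTpos
    rw [div_le_div_iff₀ hm0 hTc0]
    nlinarith [h1, h2, hTc0, hm0]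
  have hSinf : sInf S = (1 : ℝ) / (m : ℝ) :=
    le_antisymm (csInf_le ⟨(1 : ℝ) / (m : ℝ), fun x hx => hlb x hx⟩ hmem)
      (le_csInf ⟨_, hmem⟩ hlb)
  rw [hSinf]
  have hmne : (m : ℝ) ≠ 0 := ne_of_gt hm0
  rcases Nat.even_or_odd i with he | ho
  · have hie : i % 2 = 0 := Nat.even_iff.mp he
    rw [if_neg (by simp [Nat.odd_iff]; omega)]
    have h2m : 2 * m = i := by omega
    have : (i : ℝ) = 2 * (m : ℝ) := by exact_mod_cast h2m.symm
    rw [this]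
    field_simp
  · have hio : i % 2 = 1 := Nat.odd_iff.mp ho
    rw [if_pos ho]
    have h2m : 2 * m = i + 1 := by omega
    have : (i : ℝ) + 1 = 2 * (m : ℝ) := by exact_mod_cast h2m.symm
    rw [this]
    field_simp
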